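/- arXiv:2312.10599 — 4 statements merged into one kernel-verified Lean document; each statement's English description precedes it below -/
import Mathlib

section
/- If a graph G has a feasible pre-assignment of size at most k under the Include model, then G has a feasible pre-assignment of size at most k under the Exclude model. -/
variable {V : Type*} [Fintype V] [DecidableEq V]

/-- `C` is a vertex cover of `G`: every edge has an endpoint in `C`. -/
def IsVertexCover (G : SimpleGraph V) (C : Finset V) : Prop :=
  ∀ ⦃u v : V⦄, G.Adj u v → u ∈ C ∨ v ∈ C

/-- `C` is a minimum vertex cover of `G`. -/
def IsMinVertexCover (G : SimpleGraph V) (C : Finset V) : Prop :=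
  IsVertexCover G C ∧ ∀ D : Finset V, IsVertexCover G D → C.card ≤ D.card

/-- The vertex cover number τ(G). -/
noncomputable def tau (G : SimpleGraph V) : ℕ :=
  sInf {n : ℕ | ∃ C : Finset V, IsVertexCover G C ∧ C.card = n}

/-- `I` is an independent set of `G`. -/
def IsIndepSet (G : SimpleGraph V) (I : Finset V) : Prop :=
  ∀ u ∈ I, ∀ v ∈ I, ¬ G.Adj u v

/-- `D` is a dominating set of `G`. -/
def IsDomSet (G : SimpleGraph V) (D : Finset V) : Prop :=
  ∀ v : V, v ∈ D ∨ ∃ u ∈ D, G.Adj u v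

/-- N(X): vertices outside `X` adjacent to some vertex of `X`. -/
def NFinset (G : SimpleGraph V) [DecidableRel G.Adj] (X : Finset V) : Finset V :=
  (X.biUnion fun v => G.neighborFinset v) \ X

/-- `C` is a vertex cover of the induced subgraph `G - S` (vertices outside `S`). -/
def IsVCOutside (G : SimpleGraph V) (S C : Finset V) : Prop :=
  Disjoint C S ∧ ∀ ⦃u v : V⦄, G.Adj u v → u ∉ S → v ∉ S → u ∈ C ∨ v ∈ C

/-- `C` is a minimum vertex cover of the induced subgraph `G - S`. -/
def IsMinVCOutside (G : SimpleGraph V) (S C : Finset V) : Prop :=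
  IsVCOutside G S C ∧ ∀ D : Finset V, IsVCOutside G S D → C.card ≤ D.card

/-- Feasibility under the Include model. -/
def FeasibleInclude (G : SimpleGraph V) (U : Finset V) : Prop :=
  ∃! C : Finset V, IsMinVertexCover G C ∧ U ⊆ C

/-- Feasibility under the Exclude model. -/
def FeasibleExclude (G : SimpleGraph V) (U : Finset V) : Prop :=
  ∃! C : Finset V, IsMinVertexCover G C ∧ Disjoint C U

/-- Feasibility under the Mixed model. -/
def FeasibleMixed (G : SimpleGraph V) (Uin Uex : Finset V) : Prop :=
  ∃! C : Finset V, IsMinVertexCover G C ∧ Uin ⊆ C ∧ Disjoint C Uex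

/-- The graph `G'` obtained by attaching a pendant vertex `Sum.inr v`
to each vertex `Sum.inl v` of `G`. -/
def pendant (G : SimpleGraph V) : SimpleGraph (V ⊕ V) where
  Adj x y :=
    match x, y with
    | Sum.inl u, Sum.inl v => G.Adj u v
    | Sum.inl u, Sum.inr v => u = v
    | Sum.inr u, Sum.inl v => u = v
    | Sum.inr _, Sum.inr _ => False
  symm := by
    constructor
    rintro (u | u) (v | v) h
    · exact h.symm
    · exact h.symm
    · exact h.symm
    · exact h
  loopless := by
    constructor
    rintro (u | u) h
    · exact G.irrefl h
    · exact h

/-- Include-feasible of size ≤ k implies Exclude-feasible of size ≤ k. -/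
theorem stmt2 (G : SimpleGraph V) (k : ℕ)
    (h : ∃ U : Finset V, FeasibleInclude G U ∧ U.card ≤ k) :
    ∃ U : Finset V, FeasibleExclude G U ∧ U.card ≤ k := by
  classical
  obtain ⟨U, ⟨C, ⟨hCmin, hUC⟩, hCuniq⟩, hUk⟩ := h
  -- each u ∈ U has a neighbor outside C
  have key : ∀ u ∈ U, ∃ w, G.Adj u w ∧ w ∉ C := by
    intro u hu
    have huC : u ∈ C := hUC hu
    have hnot : ¬ IsVertexCover G (C.erase u) := by
      intro hcov
      have := hCmin.2 _ hcov
      have hlt : (C.erase u).card < C.card := Finset.card_erase_lt_of_mem huC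
      omega
    simp only [IsVertexCover, not_forall] at hnot
    obtain ⟨a, b, hab, hnab⟩ := hnot
    push_neg at hnab
    obtain ⟨ha, hb⟩ := hnab
    rcases hCmin.1 hab with haC | hbC
    · have hau : a = u := by
        by_contra hne
        exact ha (Finset.mem_erase.mpr ⟨hne, haC⟩)
      subst hau
      refine ⟨b, hab, fun hbC => ?_⟩
      have hbu : b = a := by
        by_contra hne
        exact hb (Finset.mem_erase.mpr ⟨hne, hbC⟩)
      exact G.loopless.irrefl a (hbu ▸ hab)
    · have hbu : b = u := by
        by_contra hne
        exact hb (Finset.mem_erase.mpr ⟨hne, hbC⟩)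
      subst hbu
      refine ⟨a, hab.symm, fun haC => ?_⟩
      have hau : a = b := by
        by_contra hne
        exact ha (Finset.mem_erase.mpr ⟨hne, haC⟩)
      exact G.loopless.irrefl b (hau ▸ hab)
  set f : V → V := fun u => if h : ∃ w, G.Adj u w ∧ w ∉ C then h.choose else u with hf
  have hfprop : ∀ u ∈ U, G.Adj u (f u) ∧ f u ∉ C := by
    intro u hu
    have h' := key u hu
    simp only [hf, dif_pos h']
    exact h'.choose_spec
  refine ⟨U.image f, ⟨C, ⟨hCmin, ?_⟩, ?_⟩, le_trans Finset.card_image_le hUk⟩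
  · rw [Finset.disjoint_right]
    intro x hx
    obtain ⟨u, hu, rfl⟩ := Finset.mem_image.mp hx
    exact (hfprop u hu).2
  · rintro D ⟨hDmin, hDdisj⟩
    refine hCuniq D ⟨hDmin, fun u hu => ?_⟩
    obtain ⟨hadj, _⟩ := hfprop u hu
    rcases hDmin.1 hadj with h1 | h2
    · exact h1
    · exact absurd h2 (Finset.disjoint_left.mp hDdisj h2
        (Finset.mem_image_of_mem f hu)).elim
end

section
/- Let G be a graph and (Ũ_in, Ũ_ex) a feasible pre-assignment of G under the Mixed model. Then the graph G − (Ũ_in ∪ N(Ũ_ex)) has a unique minimum vertex cover, and its size is τ(G) − |Ũ_in ∪ N(Ũ_ex)|. -/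
variable {V : Type*} [Fintype V] [DecidableEq V]

/-- if (Ũin, Ũex) is Mixed-feasible, then G − (Ũin ∪ N(Ũex)) has a
unique minimum vertex cover, of size τ(G) − |Ũin ∪ N(Ũex)|. -/
theorem stmt5 (G : SimpleGraph V) [DecidableRel G.Adj] (Uin Uex : Finset V)
    (h : FeasibleMixed G Uin Uex) :
    (∃! C : Finset V, IsMinVCOutside G (Uin ∪ NFinset G Uex) C) ∧
      (∀ C : Finset V, IsMinVCOutside G (Uin ∪ NFinset G Uex) C →
        C.card = tau G - (Uin ∪ NFinset G Uex).card) := by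
  obtain ⟨Cs, ⟨hmin, hin, hdisj⟩, huniq⟩ := h
  set S : Finset V := Uin ∪ NFinset G Uex with hSdef
  -- tau G = Cs.card
  have htau : tau G = Cs.card := by
    have hne : {n : ℕ | ∃ C : Finset V, IsVertexCover G C ∧ C.card = n}.Nonempty :=
      ⟨Cs.card, Cs, hmin.1, rfl⟩
    apply le_antisymm
    · exact Nat.sInf_le ⟨Cs, hmin.1, rfl⟩
    · obtain ⟨D, hD, hcard⟩ := Nat.sInf_mem hne
      rw [tau, ← hcard]
      exact hmin.2 D hD
  -- neighbors of Uex are in Cs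
  have hNsub : NFinset G Uex ⊆ Cs := by
    intro v hv
    simp only [NFinset, Finset.mem_sdiff, Finset.mem_biUnion,
      SimpleGraph.mem_neighborFinset] at hv
    obtain ⟨⟨u, hu, hadj⟩, hv2⟩ := hv
    rcases hmin.1 hadj with h1 | h2
    · exact absurd hu (Finset.disjoint_left.mp hdisj h1)
    · exact h2
  have hSsub : S ⊆ Cs := Finset.union_subset hin hNsub
  -- any neighbor of a vertex of Uex lies in S
  have hNbrS : ∀ ⦃u v : V⦄, u ∈ Uex → G.Adj u v → v ∈ S := by
    intro u v hu hadj
    have hvUex : v ∉ Uex := by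
      intro hvU
      rcases hmin.1 hadj with h1 | h2
      · exact Finset.disjoint_left.mp hdisj h1 hu
      · exact Finset.disjoint_left.mp hdisj h2 hvU
    apply Finset.mem_union_right
    simp only [NFinset, Finset.mem_sdiff, Finset.mem_biUnion,
      SimpleGraph.mem_neighborFinset]
    exact ⟨⟨u, hu, hadj⟩, hvUex⟩
  set C0 : Finset V := Cs \ S with hC0def
  have hC0card : C0.card = Cs.card - S.card := Finset.card_sdiff_of_subset hSsub
  have hC0vc : IsVCOutside G S C0 := by
    refine ⟨Finset.sdiff_disjoint, ?_⟩
    intro u v hadj hu hv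
    rcases hmin.1 hadj with h1 | h2
    · exact Or.inl (Finset.mem_sdiff.mpr ⟨h1, hu⟩)
    · exact Or.inr (Finset.mem_sdiff.mpr ⟨h2, hv⟩)
  -- for any VC outside S, D ∪ S is a VC of G
  have hunionVC : ∀ D : Finset V, IsVCOutside G S D → IsVertexCover G (D ∪ S) := by
    intro D ⟨hDdisj, hDcov⟩ u v hadj
    by_cases hu : u ∈ S
    · exact Or.inl (Finset.mem_union_right _ hu)
    by_cases hv : v ∈ S
    · exact Or.inr (Finset.mem_union_right _ hv)
    rcases hDcov hadj hu hv with h1 | h2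
    · exact Or.inl (Finset.mem_union_left _ h1)
    · exact Or.inr (Finset.mem_union_left _ h2)
  have hlb : ∀ D : Finset V, IsVCOutside G S D → Cs.card ≤ D.card + S.card := by
    intro D hD
    calc Cs.card ≤ (D ∪ S).card := hmin.2 _ (hunionVC D hD)
      _ ≤ D.card + S.card := Finset.card_union_le _ _
  have hC0min : IsMinVCOutside G S C0 := by
    refine ⟨hC0vc, ?_⟩
    intro D hD
    have := hlb D hD
    omega
  -- any minimum VC outside S is disjoint from Uex
  have hmindisj : ∀ D : Finset V, IsMinVCOutside G S D → Disjoint D Uex := by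
    rintro D ⟨⟨hDdisjS, hDcov⟩, hDmin⟩
    rw [Finset.disjoint_left]
    intro d hd hdUex
    have herase : IsVCOutside G S (D.erase d) := by
      refine ⟨Finset.disjoint_of_subset_left (Finset.erase_subset _ _) hDdisjS, ?_⟩
      intro u v hadj hu hv
      rcases hDcov hadj hu hv with h1 | h2
      · left
        refine Finset.mem_erase.mpr ⟨?_, h1⟩
        rintro rfl
        exact hv (hNbrS hdUex hadj)
      · right
        refine Finset.mem_erase.mpr ⟨?_, h2⟩
        rintro rfl
        exact hu (hNbrS hdUex hadj.symm)
    have h1 := hDmin _ herase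
    have h2 : (D.erase d).card = D.card - 1 := Finset.card_erase_of_mem hd
    have h3 : 1 ≤ D.card := Finset.card_pos.mpr ⟨d, hd⟩
    omega
  -- any minimum VC outside S equals C0
  have heq : ∀ D : Finset V, IsMinVCOutside G S D → D = C0 := by
    intro D hD
    have hDdisjUex : Disjoint D Uex := hmindisj D hD
    have hDcard : D.card ≤ Cs.card - S.card := by
      have := hD.2 C0 hC0vc
      omega
    have hScard : S.card ≤ Cs.card := Finset.card_le_card hSsub
    have hDScard : (D ∪ S).card = D.card + S.card :=
      Finset.card_union_of_disjoint hD.1.1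
    have hDSvc : IsVertexCover G (D ∪ S) := hunionVC D hD.1
    have hDSle : (D ∪ S).card ≤ Cs.card := by omega
    have hDSmin : IsMinVertexCover G (D ∪ S) := by
      refine ⟨hDSvc, ?_⟩
      intro E hE
      exact le_trans hDSle (hmin.2 E hE)
    have hUinsub : Uin ⊆ D ∪ S := fun x hx =>
      Finset.mem_union_right _ (Finset.mem_union_left _ hx)
    have hDSdisj : Disjoint (D ∪ S) Uex := by
      rw [Finset.disjoint_union_left]
      refine ⟨hDdisjUex, ?_⟩
      rw [hSdef, Finset.disjoint_union_left]
      constructor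
      · exact Finset.disjoint_of_subset_left hin hdisj
      · exact Finset.sdiff_disjoint
    have hDS : D ∪ S = Cs := huniq (D ∪ S) ⟨hDSmin, hUinsub, hDSdisj⟩
    -- D = (D ∪ S) \ S since D disjoint from S
    have : (D ∪ S) \ S = D := by
      rw [Finset.union_sdiff_right, Finset.sdiff_eq_self_of_disjoint hD.1.1]
    rw [hC0def, ← hDS, this]
  refine ⟨⟨C0, hC0min, heq⟩, ?_⟩
  intro C hC
  have h1 := hC.2 C0 hC0vc
  have h2 := hC0min.2 C hC.1
  rw [htau]
  omega
end

section
/- Let G be a graph, G' the graph obtained by attaching a pendant vertex v' to each v ∈ V(G), and let v' be a pendant vertex with unique neighbor v. If (Ũ_in, Ũ_ex) is a feasible pre-assignment of G' under the Mixed model with v' ∈ Ũ_in, then (Ũ_in \ {v'}, Ũ_ex ∪ {v}) is also a feasible pre-assignment of G' under the Mixed model. -/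
variable {V : Type*} [Fintype V] [DecidableEq V]

/-- if (Ũin, Ũex) is Mixed-feasible for G' with the pendant vertex
v' ∈ Ũin, then (Ũin \ {v'}, Ũex ∪ {v}) is also Mixed-feasible for G'. -/
theorem stmt10 (G : SimpleGraph V) (v : V) (Uin Uex : Finset (V ⊕ V))
    (h : FeasibleMixed (pendant G) Uin Uex) (hv : Sum.inr v ∈ Uin) :
    FeasibleMixed (pendant G) (Uin.erase (Sum.inr v)) (insert (Sum.inl v) Uex) := by
  obtain ⟨C, ⟨hC, hin, hex⟩, huniq⟩ := h
  have hvC : Sum.inr v ∈ C := hin hv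
  have hlC : Sum.inl v ∉ C := by
    intro hl
    have hVC : IsVertexCover (pendant G) (C.erase (Sum.inr v)) := by
      rintro (a|a) (b|b) hab
      · rcases hC.1 hab with h1 | h1
        · exact Or.inl (Finset.mem_erase.mpr ⟨by simp, h1⟩)
        · exact Or.inr (Finset.mem_erase.mpr ⟨by simp, h1⟩)
      · -- a = b, edge inl a - inr b
        cases hab
        by_cases hav : a = v
        · subst hav; exact Or.inl (Finset.mem_erase.mpr ⟨by simp, hl⟩)
        · rcases hC.1 (show (pendant G).Adj (Sum.inl a) (Sum.inr a) from rfl) with h1 | h1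
          · exact Or.inl (Finset.mem_erase.mpr ⟨by simp, h1⟩)
          · exact Or.inr (Finset.mem_erase.mpr ⟨by simpa using hav, h1⟩)
      · cases hab
        by_cases hav : a = v
        · subst hav; exact Or.inr (Finset.mem_erase.mpr ⟨by simp, hl⟩)
        · rcases hC.1 (show (pendant G).Adj (Sum.inl a) (Sum.inr a) from rfl) with h1 | h1
          · exact Or.inr (Finset.mem_erase.mpr ⟨by simp, h1⟩)
          · exact Or.inl (Finset.mem_erase.mpr ⟨by simpa using hav, h1⟩)
      · exact absurd hab id
    have := hC.2 _ hVC
    have hcard : (C.erase (Sum.inr v)).card < C.card := Finset.card_erase_lt_of_mem hvC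
    omega
  refine ⟨C, ⟨hC, fun x hx => hin (Finset.mem_of_mem_erase hx),
    Finset.disjoint_left.mpr ?_⟩, ?_⟩
  · intro a haC ha
    rcases Finset.mem_insert.mp ha with rfl | ha
    · exact hlC haC
    · exact Finset.disjoint_left.mp hex haC ha
  · rintro D ⟨hD, hDin, hDex⟩
    have hlD : Sum.inl v ∉ D :=
      fun h => Finset.disjoint_left.mp hDex h (Finset.mem_insert_self _ _)
    have hrD : Sum.inr v ∈ D := by
      have hadj : (pendant G).Adj (Sum.inl v) (Sum.inr v) := rfl
      rcases hD.1 hadj with h1 | h1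
      · exact absurd h1 hlD
      · exact h1
    refine huniq D ⟨hD, ?_, ?_⟩
    · intro x hx
      by_cases hxv : x = Sum.inr v
      · exact hxv ▸ hrD
      · exact hDin (Finset.mem_erase.mpr ⟨hxv, hx⟩)
    · exact Finset.disjoint_left.mpr fun a ha hau =>
        Finset.disjoint_left.mp hDex ha (Finset.mem_insert_of_mem hau)
end

section
/- Let G be a graph and G' be obtained by attaching a pendant vertex to each vertex of G. If G' has a feasible pre-assignment of size at most k under the Mixed model, then G has an independent dominating set of size at most k. Conversely, if G has an independent dominating set of size at most k, then G' has a feasible pre-assignment of size at most k under the Mixed model. -/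
variable {V : Type*} [Fintype V] [DecidableEq V]

section AuxStmt12
variable {V : Type*} [Fintype V] [DecidableEq V]

lemma pendant_adj_ll (G : SimpleGraph V) {u v : V} :
    (pendant G).Adj (Sum.inl u) (Sum.inl v) ↔ G.Adj u v := Iff.rfl

lemma pendant_adj_lr (G : SimpleGraph V) {u v : V} :
    (pendant G).Adj (Sum.inl u) (Sum.inr v) ↔ u = v := Iff.rfl

lemma pendant_adj_rl (G : SimpleGraph V) {u v : V} :
    (pendant G).Adj (Sum.inr u) (Sum.inl v) ↔ u = v := Iff.rfl

lemma pendant_adj_rr (G : SimpleGraph V) {u v : V} :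
    ¬ (pendant G).Adj (Sum.inr u) (Sum.inr v) := fun h => h

/-- The vertex cover of `pendant G` associated to a set `I`. -/
noncomputable def coverOf (I : Finset V) : Finset (V ⊕ V) :=
  ((Finset.univ \ I).image Sum.inl) ∪ (I.image Sum.inr)

lemma mem_coverOf_inl {I : Finset V} {v : V} : Sum.inl v ∈ coverOf I ↔ v ∉ I := by
  simp [coverOf]

lemma mem_coverOf_inr {I : Finset V} {v : V} : Sum.inr v ∈ coverOf I ↔ v ∈ I := by
  simp [coverOf]

lemma coverOf_card (I : Finset V) : (coverOf I).card = Fintype.card V := by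
  rw [coverOf, Finset.card_union_of_disjoint (by simp [Finset.disjoint_left]),
    Finset.card_image_of_injective _ Sum.inl_injective,
    Finset.card_image_of_injective _ Sum.inr_injective,
    Finset.card_sdiff_of_subset (Finset.subset_univ I), Finset.card_univ,
    Nat.sub_add_cancel (Finset.card_le_univ I)]

lemma coverOf_injective {I J : Finset V} (h : coverOf I = coverOf J) : I = J := by
  ext v
  rw [← mem_coverOf_inr (I := I), ← mem_coverOf_inr (I := J), h]

section pick
variable {C : Finset (V ⊕ V)}

open Classical in
noncomputable def pick (C : Finset (V ⊕ V)) (v : V) : V ⊕ V :=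
  if Sum.inl v ∈ C then Sum.inl v else Sum.inr v

lemma pick_mem (G : SimpleGraph V) (hC : IsVertexCover (pendant G) C) (v : V) :
    pick C v ∈ C := by
  have := hC ((pendant_adj_lr G).2 (rfl : v = v))
  unfold pick
  split <;> tauto

lemma pick_inj : Function.Injective (pick C) := by
  intro a b hab
  unfold pick at hab
  split at hab <;> split at hab <;>
    first
      | exact Sum.inl_injective hab
      | exact Sum.inr_injective hab
      | exact absurd hab (by simp)

lemma cover_card_lower (G : SimpleGraph V) (hC : IsVertexCover (pendant G) C) :
    Fintype.card V ≤ C.card := by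
  rw [← Finset.card_univ]
  exact Finset.card_le_card_of_injOn (pick C) (fun v _ => pick_mem G hC v)
    (Function.Injective.injOn pick_inj)

end pick

lemma indep_cover (G : SimpleGraph V) {I : Finset V} (hI : IsIndepSet G I) :
    IsVertexCover (pendant G) (coverOf I) := by
  rintro (u | u) (v | v) h
  · by_cases hu : u ∈ I
    · right
      rw [mem_coverOf_inl]
      exact fun hv => hI u hu v hv h
    · left; exact mem_coverOf_inl.2 hu
  · cases (pendant_adj_lr G).1 h
    by_cases hu : u ∈ I
    · right; exact mem_coverOf_inr.2 hu
    · left; exact mem_coverOf_inl.2 hu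
  · cases (pendant_adj_rl G).1 h
    by_cases hu : u ∈ I
    · left; exact mem_coverOf_inr.2 hu
    · right; exact mem_coverOf_inl.2 hu
  · exact absurd h (pendant_adj_rr G)

lemma indep_empty (G : SimpleGraph V) : IsIndepSet G (∅ : Finset V) := by
  intro u hu; simp at hu

lemma indep_insert (G : SimpleGraph V) {I : Finset V} {v : V} (hI : IsIndepSet G I)
    (hno : ∀ u ∈ I, ¬ G.Adj u v) : IsIndepSet G (insert v I) := by
  intro a ha b hb hab
  simp only [Finset.mem_insert] at ha hb
  rcases ha with rfl | ha <;> rcases hb with rfl | hb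
  · exact G.irrefl hab
  · exact hno b hb hab.symm
  · exact hno a ha hab
  · exact hI a ha b hb hab

lemma min_cover_coverOf (G : SimpleGraph V) {I : Finset V} (hI : IsIndepSet G I) :
    IsMinVertexCover (pendant G) (coverOf I) :=
  ⟨indep_cover G hI, fun D hD => by rw [coverOf_card]; exact cover_card_lower G hD⟩

lemma min_cover_eq (G : SimpleGraph V) {C : Finset (V ⊕ V)}
    (hC : IsMinVertexCover (pendant G) C) :
    ∃ I : Finset V, IsIndepSet G I ∧ C = coverOf I := by
  classical
  have hcard : C.card = Fintype.card V :=
    le_antisymm (by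
      have := hC.2 (coverOf ∅) (indep_cover G (indep_empty G))
      rwa [coverOf_card] at this) (cover_card_lower G hC.1)
  have himg : Finset.univ.image (pick C) = C := by
    apply Finset.eq_of_subset_of_card_le
    · intro x hx
      obtain ⟨v, _, rfl⟩ := Finset.mem_image.1 hx
      exact pick_mem G hC.1 v
    · rw [hcard, Finset.card_image_of_injective _ pick_inj, Finset.card_univ]
  have hnotboth : ∀ v : V, Sum.inl v ∈ C → Sum.inr v ∉ C := by
    intro v hl hr
    rw [← himg, Finset.mem_image] at hr
    obtain ⟨w, -, hw⟩ := hr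
    unfold pick at hw
    split at hw
    · exact absurd hw (by simp)
    · cases Sum.inr_injective hw
      exact (by assumption : Sum.inl v ∉ C) hl
  have hone : ∀ v : V, Sum.inl v ∈ C ∨ Sum.inr v ∈ C := fun v =>
    hC.1 ((pendant_adj_lr G).2 (rfl : v = v))
  refine ⟨Finset.univ.filter (fun v => Sum.inr v ∈ C), ?_, ?_⟩
  · intro u hu v hv hadj
    simp only [Finset.mem_filter] at hu hv
    have hlu : Sum.inl u ∉ C := fun h => hnotboth u h hu.2
    have hlv : Sum.inl v ∉ C := fun h => hnotboth v h hv.2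
    rcases hC.1 ((pendant_adj_ll G).2 hadj) with h | h
    · exact hlu h
    · exact hlv h
  · ext x
    rcases x with v | v
    · rw [mem_coverOf_inl]
      simp only [Finset.mem_filter, Finset.mem_univ, true_and]
      constructor
      · exact fun h => hnotboth v h
      · intro h
        rcases hone v with h' | h'
        · exact h'
        · exact absurd h' h
    · rw [mem_coverOf_inr]
      simp [Finset.mem_filter]

lemma filter_card_le (U : Finset (V ⊕ V)) :
    (Finset.univ.filter (fun v : V => Sum.inl v ∈ U)).card +
      (Finset.univ.filter (fun v : V => Sum.inr v ∈ U)).card ≤ U.card := by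
  classical
  have hsub : ((Finset.univ.filter (fun v : V => Sum.inl v ∈ U)).image Sum.inl ∪
      (Finset.univ.filter (fun v : V => Sum.inr v ∈ U)).image Sum.inr) ⊆ U := by
    intro x hx
    rcases Finset.mem_union.1 hx with h | h <;>
      · obtain ⟨v, hv, rfl⟩ := Finset.mem_image.1 h
        exact (Finset.mem_filter.1 hv).2
  have hle := Finset.card_le_card hsub
  rwa [Finset.card_union_of_disjoint (by simp [Finset.disjoint_left]),
    Finset.card_image_of_injective _ Sum.inl_injective,
    Finset.card_image_of_injective _ Sum.inr_injective] at hle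

end AuxStmt12

/-- G' has a Mixed-feasible pre-assignment of size ≤ k iff G has an
independent dominating set of size ≤ k. -/
theorem stmt12 (G : SimpleGraph V) (k : ℕ) :
    (∃ Uin Uex : Finset (V ⊕ V),
        FeasibleMixed (pendant G) Uin Uex ∧ Uin.card + Uex.card ≤ k) ↔
      (∃ D : Finset V, IsIndepSet G D ∧ IsDomSet G D ∧ D.card ≤ k) := by
  classical
  constructor
  · rintro ⟨Uin, Uex, ⟨C, ⟨hCmin, hCin, hCex⟩, hCuniq⟩, hk⟩
    obtain ⟨I, hIindep, rfl⟩ := min_cover_eq G hCmin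
    set A : Finset V :=
      Finset.univ.filter (fun v => Sum.inr v ∈ Uin ∨ Sum.inl v ∈ Uex) with hAdef
    set B : Finset V :=
      Finset.univ.filter (fun v => Sum.inl v ∈ Uin ∨ Sum.inr v ∈ Uex) with hBdef
    have hAI : A ⊆ I := by
      intro v hv
      simp only [hAdef, Finset.mem_filter, Finset.mem_univ, true_and] at hv
      rcases hv with h | h
      · exact mem_coverOf_inr.1 (hCin h)
      · by_contra hvI
        exact (Finset.disjoint_left.1 hCex) (mem_coverOf_inl.2 hvI) h
    have hIB : Disjoint I B := by
      rw [Finset.disjoint_left]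
      intro v hvI hvB
      simp only [hBdef, Finset.mem_filter, Finset.mem_univ, true_and] at hvB
      rcases hvB with h | h
      · exact (mem_coverOf_inl.1 (hCin h)) hvI
      · exact (Finset.disjoint_left.1 hCex) (mem_coverOf_inr.2 hvI) h
    have huniq : ∀ J : Finset V, IsIndepSet G J → A ⊆ J → Disjoint J B → J = I := by
      intro J hJ hAJ hJB
      apply coverOf_injective
      apply hCuniq
      refine ⟨min_cover_coverOf G hJ, ?_, ?_⟩
      · intro x hx
        rcases x with v | v
        · apply mem_coverOf_inl.2
          intro hvJ
          exact (Finset.disjoint_left.1 hJB) hvJ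
            (by simp only [hBdef, Finset.mem_filter, Finset.mem_univ, true_and]; exact Or.inl hx)
        · exact mem_coverOf_inr.2 (hAJ
            (by simp only [hAdef, Finset.mem_filter, Finset.mem_univ, true_and]; exact Or.inl hx))
      · rw [Finset.disjoint_left]
        rintro (v | v) hxC hxU
        · exact (mem_coverOf_inl.1 hxC) (hAJ
            (by simp only [hAdef, Finset.mem_filter, Finset.mem_univ, true_and]; exact Or.inr hxU))
        · exact (Finset.disjoint_left.1 hJB) (mem_coverOf_inr.1 hxC)
            (by simp only [hBdef, Finset.mem_filter, Finset.mem_univ, true_and]; exact Or.inr hxU)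
    have hIA : I = A := by
      apply Finset.Subset.antisymm _ hAI
      intro v hvI
      by_contra hvA
      have := huniq (I.erase v)
        (fun u hu w hw => hIindep u (Finset.mem_of_mem_erase hu) w (Finset.mem_of_mem_erase hw))
        (fun u hu => Finset.mem_erase.2 ⟨fun h => hvA (h ▸ hu), hAI hu⟩)
        (Finset.disjoint_of_subset_left (Finset.erase_subset _ _) hIB)
      exact Finset.notMem_erase v I (by rw [this]; exact hvI)
    have hdom : ∀ v, v ∉ B → v ∉ I → ∃ u ∈ I, G.Adj u v := by
      intro v hvB hvI
      by_contra hno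
      push_neg at hno
      have hJindep : IsIndepSet G (insert v I) := indep_insert G hIindep hno
      have := huniq (insert v I) hJindep (fun u hu => Finset.mem_insert_of_mem (hAI hu))
        (by rw [Finset.disjoint_left]
            intro a ha hab
            rcases Finset.mem_insert.1 ha with rfl | ha
            · exact hvB hab
            · exact (Finset.disjoint_left.1 hIB) ha hab)
      exact hvI (by rw [← this]; exact Finset.mem_insert_self v I)
    set S : Finset V := B.filter (fun v => ¬ ∃ u ∈ I, G.Adj u v) with hSdef
    have hTne : (S.powerset.filter (fun M => IsIndepSet G M)).Nonempty :=
      ⟨∅, by simp [indep_empty G]⟩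
    obtain ⟨M, hM, hMmax⟩ := Finset.exists_maximal hTne
    simp only [Finset.mem_filter, Finset.mem_powerset] at hM
    obtain ⟨hMS, hMindep⟩ := hM
    have hSdom : ∀ s ∈ S, s ∉ M → ∃ m ∈ M, G.Adj m s := by
      intro s hs hsM
      by_contra hno
      push_neg at hno
      have hins : IsIndepSet G (insert s M) := indep_insert G hMindep hno
      exact (Finset.ssubset_insert hsM).ne' (Finset.Subset.antisymm (hMmax
        (Finset.mem_filter.2 ⟨Finset.mem_powerset.2 (Finset.insert_subset hs hMS), hins⟩)
        (Finset.subset_insert s M)) (Finset.subset_insert s M))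
    have hSnoadj : ∀ s ∈ S, ∀ u ∈ I, ¬ G.Adj u s := by
      intro s hs u hu hadj
      exact ((Finset.mem_filter.1 hs).2) ⟨u, hu, hadj⟩
    refine ⟨I ∪ M, ?_, ?_, ?_⟩
    · intro a ha b hb hab
      rcases Finset.mem_union.1 ha with ha | ha <;> rcases Finset.mem_union.1 hb with hb | hb
      · exact hIindep a ha b hb hab
      · exact hSnoadj b (hMS hb) a ha hab
      · exact hSnoadj a (hMS ha) b hb hab.symm
      · exact hMindep a ha b hb hab
    · intro v
      by_cases hvB : v ∈ B
      · by_cases hvS : v ∈ S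
        · by_cases hvM : v ∈ M
          · exact Or.inl (Finset.mem_union_right _ hvM)
          · obtain ⟨m, hm, hadj⟩ := hSdom v hvS hvM
            exact Or.inr ⟨m, Finset.mem_union_right _ hm, hadj⟩
        · have hex : ∃ u ∈ I, G.Adj u v := by
            by_contra hno
            exact hvS (Finset.mem_filter.2 ⟨hvB, hno⟩)
          obtain ⟨u, hu, hadj⟩ := hex
          exact Or.inr ⟨u, Finset.mem_union_left _ hu, hadj⟩
      · by_cases hvI : v ∈ I
        · exact Or.inl (Finset.mem_union_left _ hvI)
        · obtain ⟨u, hu, hadj⟩ := hdom v hvB hvI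
          exact Or.inr ⟨u, Finset.mem_union_left _ hu, hadj⟩
    · have hMB : M.card ≤ B.card :=
        Finset.card_le_card (hMS.trans (Finset.filter_subset _ _))
      have hIcard : I.card = A.card := by rw [hIA]
      have hA2 : A.card ≤ (Finset.univ.filter (fun v : V => Sum.inr v ∈ Uin)).card +
          (Finset.univ.filter (fun v : V => Sum.inl v ∈ Uex)).card := by
        rw [hAdef, Finset.filter_or]
        exact Finset.card_union_le _ _
      have hB2 : B.card ≤ (Finset.univ.filter (fun v : V => Sum.inl v ∈ Uin)).card +
          (Finset.univ.filter (fun v : V => Sum.inr v ∈ Uex)).card := by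
        rw [hBdef, Finset.filter_or]
        exact Finset.card_union_le _ _
      have h1 := filter_card_le (V := V) Uin
      have h2 := filter_card_le (V := V) Uex
      have h3 := Finset.card_union_le I M
      omega
  · rintro ⟨D, hInd, hDom, hk⟩
    refine ⟨D.image Sum.inr, ∅, ⟨coverOf D, ⟨min_cover_coverOf G hInd, ?_,
      Finset.disjoint_empty_right _⟩, ?_⟩, ?_⟩
    · intro x hx
      obtain ⟨d, hd, rfl⟩ := Finset.mem_image.1 hx
      exact mem_coverOf_inr.2 hd
    · rintro C' ⟨hC'min, hC'in, -⟩
      obtain ⟨J, hJ, rfl⟩ := min_cover_eq G hC'min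
      suffices hJD : J = D by rw [hJD]
      apply Finset.Subset.antisymm
      · intro v hv
        rcases hDom v with h | ⟨u, hu, hadj⟩
        · exact h
        · have huJ : u ∈ J :=
            mem_coverOf_inr.1 (hC'in (Finset.mem_image.2 ⟨u, hu, rfl⟩))
          exact absurd hadj (hJ u huJ v hv)
      · intro d hd
        exact mem_coverOf_inr.1 (hC'in (Finset.mem_image.2 ⟨d, hd, rfl⟩))
    · simpa [Finset.card_image_of_injective _ Sum.inr_injective] using hk
end
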